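/- arXiv:1005.0495 — 3 statements merged into one kernel-verified Lean document; each statement's English description precedes it below -/
import Mathlib

section
/- If g is a finite-dimensional Lie algebra with structure constants C_{AB}^C (i.e., [T_A, T_B] = C_{AB}^C T_C) and S is a finite abelian semigroup with selectors K_{αβ}^γ (equal to 1 if λ_α λ_β = λ_γ and 0 otherwise), then the constants C_{(A,α)(B,β)}^{(C,γ)} = C_{AB}^C K_{αβ}^γ are antisymmetric in the pairs (A,α), (B,β) and satisfy the Jacobi identity for structure constants. -/
open Finset

/-- the expanded structure constants
`C_{(A,α)(B,β)}^{(C,γ)} = C_{AB}^C K_{αβ}^γ` are antisymmetric and satisfy the Jacobi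
identity for structure constants. -/
theorem expanded_structure_constants
    {K ι S : Type*} [Field K] [Fintype ι] [Fintype S] [CommSemigroup S] [DecidableEq S]
    (C : ι → ι → ι → K)
    (hanti : ∀ A B E, C A B E = - C B A E)
    (hjac : ∀ A B C' E,
      ∑ D, (C A B D * C D C' E + C C' A D * C D B E + C B C' D * C D A E) = 0) :
    let Ksel : S → S → S → K := fun α β γ => if α * β = γ then 1 else 0
    let CC : ι × S → ι × S → ι × S → K :=
      fun p q r => C p.1 q.1 r.1 * Ksel p.2 q.2 r.2
    (∀ p q r : ι × S, CC p q r = - CC q p r) ∧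
    (∀ p q r e : ι × S,
      ∑ d : ι × S, (CC p q d * CC d r e + CC r p d * CC d q e + CC q r d * CC d p e) = 0) := by
  intro Ksel CC
  constructor
  · intro p q r
    simp only [CC, Ksel]
    rw [hanti p.1 q.1 r.1, mul_comm p.2 q.2]
    ring
  · rintro ⟨A, α⟩ ⟨B, β⟩ ⟨C', γ⟩ ⟨E, ε⟩
    simp only [CC, Ksel]
    rw [Fintype.sum_prod_type]
    have key : ∀ (x y : S) (a b : K),
        (∑ δ : S, (a * if x = δ then 1 else 0) * (b * if δ * y = ε then 1 else 0))
          = a * b * if x * y = ε then 1 else 0 := by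
      intro x y a b
      rw [Finset.sum_eq_single x]
      · simp [mul_assoc]
      · intro c _ hc
        simp [Ne.symm hc]
      · simp
    have h1 : (γ * α) * β = (α * β) * γ := mul_rotate γ α β
    have h2 : (β * γ) * α = (α * β) * γ := (mul_rotate β γ α).trans h1
    have : ∀ D : ι,
        (∑ δ : S, ((C A B D * if α * β = δ then 1 else 0) * (C D C' E * if δ * γ = ε then 1 else 0)
          + (C C' A D * if γ * α = δ then 1 else 0) * (C D B E * if δ * β = ε then 1 else 0)
          + (C B C' D * if β * γ = δ then 1 else 0) * (C D A E * if δ * α = ε then 1 else 0)))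
        = (C A B D * C D C' E + C C' A D * C D B E + C B C' D * C D A E)
            * if (α * β) * γ = ε then 1 else 0 := by
      intro D
      rw [Finset.sum_add_distrib, Finset.sum_add_distrib, key, key, key, h1, h2]
      ring
    calc ∑ D : ι, ∑ δ : S,
          ((C A B D * if α * β = δ then 1 else 0) * (C D C' E * if δ * γ = ε then 1 else 0)
          + (C C' A D * if γ * α = δ then 1 else 0) * (C D B E * if δ * β = ε then 1 else 0)
          + (C B C' D * if β * γ = δ then 1 else 0) * (C D A E * if δ * α = ε then 1 else 0))
        = ∑ D : ι, (C A B D * C D C' E + C C' A D * C D B E + C B C' D * C D A E)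
            * if (α * β) * γ = ε then 1 else 0 := by
          exact Finset.sum_congr rfl fun D _ => this D
      _ = (∑ D : ι, (C A B D * C D C' E + C C' A D * C D B E + C B C' D * C D A E))
            * if (α * β) * γ = ε then 1 else 0 := by rw [Finset.sum_mul]
      _ = 0 := by rw [hjac]; ring
end

section
/- Given a Lie algebra g with invariant symmetric bilinear form B, the central extension g ⊗ K[z,z^{-1}] ⊕ K·k with bracket [x⊗z^m + a·k, y⊗z^n + b·k] = [x,y]⊗z^{m+n} + m δ_{m,-n} B(x,y)·k (and k central) satisfies the Jacobi identity, defining the (untwisted) affine Kac–Moody algebra. -/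
/-- The loop-algebra bracket on `g ⊗ K[z,z⁻¹]`, modelled as `ℤ →₀ L`. -/
noncomputable def zBracket {L : Type*} [LieRing L] (f g : ℤ →₀ L) : ℤ →₀ L :=
  f.sum fun m x => g.sum fun n y => Finsupp.single (m + n) ⁅x, y⁆

/-- The Kac–Moody cocycle `ω(x⊗z^m, y⊗z^n) = m δ_{m,-n} B(x,y)`, extended bilinearly. -/
noncomputable def kmCocycle {K L : Type*} [Field K] [LieRing L] [LieAlgebra K L]
    (B : L →ₗ[K] L →ₗ[K] K) (f g : ℤ →₀ L) : K :=
  f.sum fun m x => g.sum fun n y => if m + n = 0 then (m : K) * B x y else 0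

/-- The affine Kac–Moody bracket on `L(g) ⊕ K·k`:
`[x⊗z^m + a·k, y⊗z^n + b·k] = [x,y]⊗z^{m+n} + m δ_{m,-n} B(x,y)·k` with `k` central. -/
noncomputable def kmBracket {K L : Type*} [Field K] [LieRing L] [LieAlgebra K L]
    (B : L →ₗ[K] L →ₗ[K] K) (u v : (ℤ →₀ L) × K) : (ℤ →₀ L) × K :=
  (zBracket u.1 v.1, kmCocycle B u.1 v.1)

section Aux

variable {K L : Type*} [Field K] [LieRing L] [LieAlgebra K L]

lemma zB_zero_left (g : ℤ →₀ L) : zBracket 0 g = 0 := Finsupp.sum_zero_index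

lemma zB_zero_right (f : ℤ →₀ L) : zBracket f 0 = 0 := by
  simp [zBracket, Finsupp.sum_zero_index]

lemma zB_add_left (f f' g : ℤ →₀ L) :
    zBracket (f + f') g = zBracket f g + zBracket f' g := by
  unfold zBracket
  refine Finsupp.sum_add_index' (fun m => ?_) (fun m x x' => ?_)
  · simp
  · simp [add_lie, Finsupp.single_add, Finsupp.sum_add]

lemma zB_add_right (f g g' : ℤ →₀ L) :
    zBracket f (g + g') = zBracket f g + zBracket f g' := by
  unfold zBracket
  rw [← Finsupp.sum_add]
  refine Finsupp.sum_congr fun m _ => ?_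
  refine Finsupp.sum_add_index' (fun n => ?_) (fun n y y' => ?_)
  · simp
  · simp [lie_add, Finsupp.single_add]

lemma zB_single_single (m n : ℤ) (x y : L) :
    zBracket (Finsupp.single m x) (Finsupp.single n y)
      = Finsupp.single (m + n) ⁅x, y⁆ := by
  unfold zBracket
  rw [Finsupp.sum_single_index, Finsupp.sum_single_index] <;> simp

lemma kc_zero_left (B : L →ₗ[K] L →ₗ[K] K) (g : ℤ →₀ L) : kmCocycle B 0 g = 0 :=
  Finsupp.sum_zero_index

lemma kc_zero_right (B : L →ₗ[K] L →ₗ[K] K) (f : ℤ →₀ L) : kmCocycle B f 0 = 0 := by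
  simp [kmCocycle, Finsupp.sum_zero_index]

lemma kc_add_left (B : L →ₗ[K] L →ₗ[K] K) (f f' g : ℤ →₀ L) :
    kmCocycle B (f + f') g = kmCocycle B f g + kmCocycle B f' g := by
  unfold kmCocycle
  refine Finsupp.sum_add_index' (fun m => ?_) (fun m x x' => ?_)
  · simp
  · rw [← Finsupp.sum_add]
    refine Finsupp.sum_congr fun n _ => ?_
    split_ifs <;> simp [mul_add]

lemma kc_add_right (B : L →ₗ[K] L →ₗ[K] K) (f g g' : ℤ →₀ L) :
    kmCocycle B f (g + g') = kmCocycle B f g + kmCocycle B f g' := by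
  unfold kmCocycle
  rw [← Finsupp.sum_add]
  refine Finsupp.sum_congr fun m _ => ?_
  refine Finsupp.sum_add_index' (fun n => ?_) (fun n y y' => ?_)
  · simp
  · split_ifs <;> simp [mul_add]

lemma kc_single_single (B : L →ₗ[K] L →ₗ[K] K) (m n : ℤ) (x y : L) :
    kmCocycle B (Finsupp.single m x) (Finsupp.single n y)
      = if m + n = 0 then (m : K) * B x y else 0 := by
  unfold kmCocycle
  rw [Finsupp.sum_single_index, Finsupp.sum_single_index] <;> simp

lemma zB_antisymm (f g : ℤ →₀ L) : zBracket f g = - zBracket g f := by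
  unfold zBracket
  rw [Finsupp.sum_comm, ← Finsupp.sum_neg]
  refine Finsupp.sum_congr fun n _ => ?_
  rw [← Finsupp.sum_neg]
  refine Finsupp.sum_congr fun m _ => ?_
  rw [← Finsupp.single_neg, lie_skew, add_comm]

lemma kc_antisymm (B : L →ₗ[K] L →ₗ[K] K) (hsymm : ∀ x y : L, B x y = B y x)
    (f g : ℤ →₀ L) : kmCocycle B f g = - kmCocycle B g f := by
  unfold kmCocycle
  rw [Finsupp.sum_comm, ← Finsupp.sum_neg]
  refine Finsupp.sum_congr fun n _ => ?_
  rw [← Finsupp.sum_neg]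
  refine Finsupp.sum_congr fun m _ => ?_
  rw [add_comm n m, hsymm (g n) (f m)]
  split_ifs with h
  · have hn : ((n : ℤ) : K) = -(m : K) := by
      have hnm : n = -m := by omega
      rw [hnm]; push_cast; ring
    rw [hn]; ring
  · simp

lemma zB_jacobi (f g h : ℤ →₀ L) :
    zBracket f (zBracket g h) + zBracket h (zBracket f g) + zBracket g (zBracket h f) = 0 := by
  induction f using Finsupp.induction_linear with
  | zero => simp [zB_zero_left, zB_zero_right]
  | add f f' hf hf' =>
    have e : zBracket (f + f') (zBracket g h) + zBracket h (zBracket (f + f') g) +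
        zBracket g (zBracket h (f + f')) =
        (zBracket f (zBracket g h) + zBracket h (zBracket f g) + zBracket g (zBracket h f)) +
        (zBracket f' (zBracket g h) + zBracket h (zBracket f' g) +
          zBracket g (zBracket h f')) := by
      simp only [zB_add_left, zB_add_right]; abel
    rw [e, hf, hf', add_zero]
  | single m x =>
    induction g using Finsupp.induction_linear with
    | zero => simp [zB_zero_left, zB_zero_right]
    | add g g' hg hg' =>
      have e : zBracket (Finsupp.single m x) (zBracket (g + g') h) +
          zBracket h (zBracket (Finsupp.single m x) (g + g')) +
          zBracket (g + g') (zBracket h (Finsupp.single m x)) =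
          (zBracket (Finsupp.single m x) (zBracket g h) +
            zBracket h (zBracket (Finsupp.single m x) g) +
            zBracket g (zBracket h (Finsupp.single m x))) +
          (zBracket (Finsupp.single m x) (zBracket g' h) +
            zBracket h (zBracket (Finsupp.single m x) g') +
            zBracket g' (zBracket h (Finsupp.single m x))) := by
        simp only [zB_add_left, zB_add_right]; abel
      rw [e, hg, hg', add_zero]
    | single n y =>
      induction h using Finsupp.induction_linear with
      | zero => simp [zB_zero_left, zB_zero_right]
      | add h h' hh hh' =>
        have e : zBracket (Finsupp.single m x) (zBracket (Finsupp.single n y) (h + h')) +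
            zBracket (h + h') (zBracket (Finsupp.single m x) (Finsupp.single n y)) +
            zBracket (Finsupp.single n y) (zBracket (h + h') (Finsupp.single m x)) =
            (zBracket (Finsupp.single m x) (zBracket (Finsupp.single n y) h) +
              zBracket h (zBracket (Finsupp.single m x) (Finsupp.single n y)) +
              zBracket (Finsupp.single n y) (zBracket h (Finsupp.single m x))) +
            (zBracket (Finsupp.single m x) (zBracket (Finsupp.single n y) h') +
              zBracket h' (zBracket (Finsupp.single m x) (Finsupp.single n y)) +
              zBracket (Finsupp.single n y) (zBracket h' (Finsupp.single m x))) := by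
          simp only [zB_add_left, zB_add_right]; abel
        rw [e, hh, hh', add_zero]
      | single p z =>
        rw [zB_single_single, zB_single_single, zB_single_single, zB_single_single,
          zB_single_single, zB_single_single]
        rw [show p + (m + n) = m + (n + p) by ring, show n + (p + m) = m + (n + p) by ring,
          ← Finsupp.single_add, ← Finsupp.single_add]
        have hjac : ⁅x, ⁅y, z⁆⁆ + ⁅z, ⁅x, y⁆⁆ + ⁅y, ⁅z, x⁆⁆ = 0 := by
          rw [add_right_comm]; exact lie_jacobi x y z
        rw [hjac, Finsupp.single_zero]

lemma kc_jacobi (B : L →ₗ[K] L →ₗ[K] K) (hsymm : ∀ x y : L, B x y = B y x)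
    (hinv : ∀ x y z : L, B ⁅x, y⁆ z = B x ⁅y, z⁆) (f g h : ℤ →₀ L) :
    kmCocycle B f (zBracket g h) + kmCocycle B h (zBracket f g) +
      kmCocycle B g (zBracket h f) = 0 := by
  induction f using Finsupp.induction_linear with
  | zero => simp [zB_zero_left, zB_zero_right, kc_zero_left, kc_zero_right]
  | add f f' hf hf' =>
    simp only [zB_add_left, zB_add_right, kc_add_left, kc_add_right]
    linear_combination hf + hf'
  | single m x =>
    induction g using Finsupp.induction_linear with
    | zero => simp [zB_zero_left, zB_zero_right, kc_zero_left, kc_zero_right]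
    | add g g' hg hg' =>
      simp only [zB_add_left, zB_add_right, kc_add_left, kc_add_right]
      linear_combination hg + hg'
    | single n y =>
      induction h using Finsupp.induction_linear with
      | zero => simp [zB_zero_left, zB_zero_right, kc_zero_left, kc_zero_right]
      | add h h' hh hh' =>
        simp only [zB_add_left, zB_add_right, kc_add_left, kc_add_right]
        linear_combination hh + hh'
      | single p z =>
        rw [zB_single_single, zB_single_single, zB_single_single,
          kc_single_single, kc_single_single, kc_single_single]
        have hx : B x ⁅y, z⁆ = B ⁅x, y⁆ z := (hinv x y z).symm
        have hz : B z ⁅x, y⁆ = B ⁅x, y⁆ z := hsymm z ⁅x, y⁆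
        have hy : B y ⁅z, x⁆ = B ⁅x, y⁆ z := by
          rw [← hinv y z x, hsymm ⁅y, z⁆ x, hinv x y z]
        rw [hx, hy, hz]
        split_ifs with h1 h2 h3 <;> try (exfalso; omega)
        · have hc : (m : K) + n + p = 0 := by
            have : ((m + (n + p) : ℤ) : K) = 0 := by rw [h1]; norm_num
            push_cast at this; linear_combination this
          linear_combination (B ⁅x, y⁆ z) * hc
        · simp

end Aux

/-- the affine Kac–Moody bracket (central extension of the loop algebra by
the cocycle built from an invariant symmetric bilinear form `B`) is antisymmetric and
satisfies the Jacobi identity. -/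
theorem affineKacMoody_isLieAlgebra
    {K L : Type*} [Field K] [LieRing L] [LieAlgebra K L]
    (B : L →ₗ[K] L →ₗ[K] K)
    (hsymm : ∀ x y : L, B x y = B y x)
    (hinv : ∀ x y z : L, B ⁅x, y⁆ z = B x ⁅y, z⁆) :
    (∀ u v : (ℤ →₀ L) × K, kmBracket B u v = - kmBracket B v u) ∧
    (∀ u v w : (ℤ →₀ L) × K,
      kmBracket B u (kmBracket B v w) + kmBracket B w (kmBracket B u v)
        + kmBracket B v (kmBracket B w u) = 0) ∧
    (∀ (a : K) (u : (ℤ →₀ L) × K), kmBracket B (0, a) u = 0 ∧ kmBracket B u (0, a) = 0) := by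
  refine ⟨fun u v => ?_, fun u v w => ?_, fun a u => ⟨?_, ?_⟩⟩
  · exact Prod.ext (by simpa [kmBracket] using zB_antisymm u.1 v.1)
      (by simpa [kmBracket] using kc_antisymm B hsymm u.1 v.1)
  · refine Prod.ext ?_ ?_
    · simpa [kmBracket] using zB_jacobi u.1 v.1 w.1
    · simpa [kmBracket] using kc_jacobi B hsymm hinv u.1 v.1 w.1
  · exact Prod.ext (by simpa [kmBracket] using zB_zero_left u.1)
      (by simpa [kmBracket] using kc_zero_left B u.1)
  · exact Prod.ext (by simpa [kmBracket] using zB_zero_right u.1)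
      (by simpa [kmBracket] using kc_zero_right B u.1)
end

section
/- Let S be an abelian semigroup with a zero element 0_S (satisfying 0_S · λ = 0_S for all λ ∈ S), and g a Lie algebra. Then the subspace W_{0_S} = {(0_S, x) : x ∈ g} of the S-expanded algebra S ⊗ g is a Lie ideal, and the quotient (S ⊗ g)/W_{0_S} is isomorphic to the (S \ {0_S})-graded algebra obtained by setting all brackets landing in the 0_S-component to zero (the 0_S-reduced algebra). -/
/-- The S-expanded bracket on `S →₀ L`. -/
noncomputable def sBracket {S : Type*} [Mul S] {L : Type*} [LieRing L]
    (f g : S →₀ L) : S →₀ L :=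
  f.sum fun α x => g.sum fun β y => Finsupp.single (α * β) ⁅x, y⁆

/-- The 0_S-reduced bracket on `⊕_{α ≠ 0_S} g`: equal to `(αβ, [x,y])` when `αβ ≠ 0_S`
and zero otherwise. -/
noncomputable def redBracket {S : Type*} [CommSemigroup S] [DecidableEq S] (z : S)
    {L : Type*} [LieRing L]
    (f g : {s : S // s ≠ z} →₀ L) : {s : S // s ≠ z} →₀ L :=
  f.sum fun α x => g.sum fun β y =>
    if h : (α : S) * (β : S) = z then 0 else Finsupp.single ⟨(α : S) * β, h⟩ ⁅x, y⁆

section aux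
set_option linter.unusedSectionVars false
set_option maxHeartbeats 1000000
variable {K S L : Type*} [Field K] [CommSemigroup S] [DecidableEq S]
    [LieRing L] [LieAlgebra K L] (z : S)

lemma sum_subtypeDomain_eq {M : Type*} [AddCommMonoid M] (v : S →₀ L) (H : S → L → M)
    (h0 : ∀ x, H z x = 0) :
    (Finsupp.subtypeDomain (· ≠ z) v).sum (fun a x => H ↑a x) = v.sum H := by
  rw [Finsupp.sum, Finsupp.sum, Finsupp.support_subtypeDomain]
  have : ∀ a : {s : S // s ≠ z},
      H ↑a ((Finsupp.subtypeDomain (· ≠ z) v) a) = H ↑a (v ↑a) := fun a => rfl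
  simp only [this]
  refine (Finset.sum_subtype_eq_sum_filter (fun s => H s (v s)) (s := v.support)).trans ?_
  refine Finset.sum_filter_of_ne ?_
  intro x _ hx
  intro hxz
  exact hx (by rw [hxz]; exact h0 _)

lemma subtypeDomain_single (a : S) (b : L) :
    Finsupp.subtypeDomain (· ≠ z) (Finsupp.single a b) =
      if h : a = z then 0 else Finsupp.single (⟨a, h⟩ : {s : S // s ≠ z}) b := by
  ext ⟨s, hs⟩
  rw [Finsupp.subtypeDomain_apply]
  split_ifs with h
  · subst h
    simp [Finsupp.single_apply, Ne.symm hs]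
  · simp [Finsupp.single_apply, Subtype.ext_iff]

set_option maxHeartbeats 2000000 in
lemma key (hz : ∀ s : S, z * s = z ∧ s * z = z) (f g : S →₀ L) :
    Finsupp.subtypeDomain (· ≠ z) (sBracket f g) =
      redBracket z (Finsupp.subtypeDomain (· ≠ z) f) (Finsupp.subtypeDomain (· ≠ z) g) := by
  unfold sBracket redBracket
  refine Eq.trans ?_ (sum_subtypeDomain_eq z f
    (fun a x => (Finsupp.subtypeDomain (· ≠ z) g).sum fun β y =>
      if h : a * ↑β = z then 0 else Finsupp.single (⟨a * ↑β, h⟩ : {s : S // s ≠ z}) ⁅x, y⁆)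
    (fun x => by
      rw [show (fun (β : {s : S // s ≠ z}) (y : L) =>
          if h : z * ↑β = z then (0 : {s : S // s ≠ z} →₀ L)
          else Finsupp.single ⟨z * ↑β, h⟩ ⁅x, y⁆) = fun _ _ => 0 from
        funext fun β => funext fun y => dif_pos (hz ↑β).1, Finsupp.sum_fun_zero])).symm
  rw [Finsupp.subtypeDomain_finsupp_sum]
  refine Finsupp.sum_congr fun a _ => ?_
  refine Eq.trans ?_ (sum_subtypeDomain_eq z g
    (fun b y => if h : a * b = z then 0 else Finsupp.single (⟨a * b, h⟩ : {s : S // s ≠ z}) ⁅f a, y⁆)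
    (fun y => dif_pos (hz a).2)).symm
  rw [Finsupp.subtypeDomain_finsupp_sum]
  exact Finsupp.sum_congr fun b _ => subtypeDomain_single z (a * b) ⁅f a, g b⁆

noncomputable def myP : (S →₀ L) →ₗ[K] ({s : S // s ≠ z} →₀ L) where
  toFun := Finsupp.subtypeDomain (· ≠ z)
  map_add' f g := Finsupp.subtypeDomain_add
  map_smul' c f := by ext a; simp [Finsupp.subtypeDomain_apply]

lemma myP_surj : Function.Surjective (myP (K := K) (L := L) z) := by
  intro g
  refine ⟨g.embDomain (Function.Embedding.subtype _), ?_⟩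
  ext a
  simp [myP, Finsupp.subtypeDomain_apply]
  rw [← Function.Embedding.coe_subtype (fun s => s ≠ z), Finsupp.embDomain_apply_self]

lemma myP_ker : LinearMap.ker (myP (K := K) (L := L) z) =
    Finsupp.supported L K ({z} : Set S) := by
  ext f
  simp only [LinearMap.mem_ker, Finsupp.mem_supported, myP, LinearMap.coe_mk, AddHom.coe_mk]
  constructor
  · intro h s hs
    by_contra hsz
    have := DFunLike.congr_fun h ⟨s, hsz⟩
    rw [Finsupp.subtypeDomain_apply] at this
    exact absurd this (Finsupp.mem_support_iff.mp hs)
  · intro h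
    ext ⟨s, hs⟩
    rw [Finsupp.subtypeDomain_apply]
    by_contra hne
    exact hs (h (Finsupp.mem_support_iff.mpr hne))

lemma redBracket_zero_left (g : {s : S // s ≠ z} →₀ L) : redBracket z 0 g = 0 := by
  unfold redBracket; exact Finsupp.sum_zero_index

lemma redBracket_zero_right (f : {s : S // s ≠ z} →₀ L) : redBracket z f 0 = 0 := by
  unfold redBracket
  rw [show (fun (α : {s : S // s ≠ z}) (x : L) => (0 : {s : S // s ≠ z} →₀ L).sum fun β y =>
      if h : (α : S) * (β : S) = z then 0 else Finsupp.single ⟨(α : S) * β, h⟩ ⁅x, y⁆)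
      = fun _ _ => (0 : {s : S // s ≠ z} →₀ L) from
    funext fun α => funext fun x => Finsupp.sum_zero_index, Finsupp.sum_fun_zero]

end aux

/-- if `S` has an absorbing (zero) element `0_S`, the summand
`W_{0_S} = {(0_S, x)}` of `S ⊗ g` is a Lie ideal, and the quotient `(S ⊗ g)/W_{0_S}` is
isomorphic to the `0_S`-reduced algebra. -/
theorem sExpansion_zero_reduction
    {K S L : Type*} [Field K] [CommSemigroup S] [DecidableEq S]
    [LieRing L] [LieAlgebra K L]
    (z : S) (hz : ∀ s : S, z * s = z ∧ s * z = z) :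
    let W : Submodule K (S →₀ L) := Finsupp.supported L K ({z} : Set S)
    (∀ f ∈ W, ∀ g : S →₀ L, sBracket f g ∈ W ∧ sBracket g f ∈ W) ∧
    ∃ E : ((S →₀ L) ⧸ W) ≃ₗ[K] ({s : S // s ≠ z} →₀ L),
      ∀ f g : S →₀ L,
        E (Submodule.Quotient.mk (sBracket f g)) =
          redBracket z (E (Submodule.Quotient.mk f)) (E (Submodule.Quotient.mk g)) := by
  intro W
  have hW : W = LinearMap.ker (myP (K := K) (L := L) z) := (myP_ker z).symm
  have hPbr : ∀ f g : S →₀ L, myP (K := K) z (sBracket f g) =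
      redBracket z (myP (K := K) z f) (myP (K := K) z g) := fun f g => key z hz f g
  constructor
  · intro f hf g
    rw [hW, LinearMap.mem_ker] at hf ⊢
    rw [LinearMap.mem_ker]
    constructor
    · rw [hPbr, hf, redBracket_zero_left]
    · rw [hPbr, hf, redBracket_zero_right]
  · refine ⟨(Submodule.quotEquivOfEq W _ hW).trans
      ((myP (K := K) z).quotKerEquivOfSurjective (myP_surj z)), fun f g => ?_⟩
    have hmk : ∀ h : S →₀ L,
        ((Submodule.quotEquivOfEq W _ hW).trans
          ((myP (K := K) z).quotKerEquivOfSurjective (myP_surj z)))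
          (Submodule.Quotient.mk h) = myP (K := K) z h := by
      intro h
      rw [LinearEquiv.trans_apply, Submodule.quotEquivOfEq_mk]
      simp [LinearMap.quotKerEquivOfSurjective, LinearMap.quotKerEquivRange_apply_mk]
    rw [hmk, hmk, hmk, hPbr]
end
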